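/- The 2-dimensional, 3-level Construction C constellation Γ_C = C_1 + 2C_2 + 4C_3 + 8Z^2 with C_1 = C_2 = {(0,0),(1,1)} and C_3 = {(0,0)}, which equals {(8k_1 + j, 8k_2 + j) : k_1, k_2 ∈ Z, j ∈ {0,1,2,3}}, does not have equi-distance spectrum: the number of points at Euclidean distance √2 from (3,3) is 1, while from (1,1) it is 2. In particular, Γ_C is not geometrically uniform. -/

import Mathlib

/-- The 2-dimensional 3-level Construction C constellation
`Γ_C = {(8k₁ + j, 8k₂ + j) : k₁, k₂ ∈ ℤ, j ∈ {0,1,2,3}}` built from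
`C₁ = C₂ = {(0,0),(1,1)}` and `C₃ = {(0,0)}`. -/
noncomputable def gammaEx : Set (EuclideanSpace ℝ (Fin 2)) :=
  {p | ∃ k₁ k₂ : ℤ, ∃ j : Fin 4,
        p = WithLp.toLp 2 (fun i => if i = 0 then ((8 * k₁ + (j : ℤ) : ℤ) : ℝ) else ((8 * k₂ + (j : ℤ) : ℤ) : ℝ))}

/-- The point `(3,3)`. -/
noncomputable def pt33 : EuclideanSpace ℝ (Fin 2) := WithLp.toLp 2 (fun _ => (3 : ℝ))

/-- The point `(1,1)`. -/
noncomputable def pt11 : EuclideanSpace ℝ (Fin 2) := WithLp.toLp 2 (fun _ => (1 : ℝ))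

lemma sq_two (a b : ℤ) (h : a^2 + b^2 = 2) : (a = 1 ∨ a = -1) ∧ (b = 1 ∨ b = -1) := by
  have ha1 : -1 ≤ a := by nlinarith [sq_nonneg b, sq_nonneg (a+1)]
  have ha2 : a ≤ 1 := by nlinarith [sq_nonneg b, sq_nonneg (a-1)]
  have hb1 : -1 ≤ b := by nlinarith [sq_nonneg a, sq_nonneg (b+1)]
  have hb2 : b ≤ 1 := by nlinarith [sq_nonneg a, sq_nonneg (b-1)]
  interval_cases a <;> interval_cases b <;> simp_all

lemma dist_sq (y x : EuclideanSpace ℝ (Fin 2)) (h : dist y x = Real.sqrt 2) :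
    (y 0 - x 0)^2 + (y 1 - x 1)^2 = 2 := by
  rw [EuclideanSpace.dist_eq, Fin.sum_univ_two] at h
  have h2 := congrArg (·^2) h
  simp only at h2
  rw [Real.sq_sqrt (by positivity), Real.sq_sqrt (by norm_num)] at h2
  simpa [Real.dist_eq, sq_abs] using h2

/-- diagonal point (c,c) as an element -/
noncomputable def diag (c : ℝ) : EuclideanSpace ℝ (Fin 2) := WithLp.toLp 2 (fun _ => c)

lemma diag_mem (j : Fin 4) : diag ((j : ℤ) : ℝ) ∈ gammaEx := by
  refine ⟨0, 0, j, ?_⟩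
  ext i
  simp [diag]

lemma jcast (j : Fin 4) : 0 ≤ (j : ℤ) ∧ (j : ℤ) ≤ 3 := by
  have := j.isLt
  omega

lemma mem_sphere_iff (p : EuclideanSpace ℝ (Fin 2)) (t : ℤ)
    (hp : p ∈ gammaEx) (hd : dist p (diag (t : ℝ)) = Real.sqrt 2) :
    ∃ c : ℤ, p = diag (c : ℝ) ∧ (c - t = 1 ∨ c - t = -1) ∧
      ∃ k m : ℤ, c = 8 * k + m ∧ 0 ≤ m ∧ m ≤ 3 := by
  obtain ⟨k₁, k₂, j, rfl⟩ := hp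
  have hsq := dist_sq _ _ hd
  norm_num [diag] at hsq
  have hsqz : (8 * k₁ + (j : ℤ) - t)^2 + (8 * k₂ + (j : ℤ) - t)^2 = 2 := by
    have : ((8 * k₁ + (j : ℤ) - t : ℤ) : ℝ)^2 + ((8 * k₂ + (j : ℤ) - t : ℤ) : ℝ)^2 = 2 := by
      push_cast
      convert hsq using 2 <;> simp [diag]
    exact_mod_cast this
  obtain ⟨ha, hb⟩ := sq_two _ _ hsqz
  obtain ⟨hj0, hj3⟩ := jcast j
  have hk : k₁ = k₂ := by omega
  refine ⟨8 * k₁ + (j : ℤ), ?_, by omega, k₁, (j : ℤ), rfl, by omega, by omega⟩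
  subst hk
  ext i
  fin_cases i <;> simp [diag]

lemma dist_diag (a b : ℤ) (h : a - b = 1 ∨ a - b = -1) :
    dist (diag (a : ℝ)) (diag (b : ℝ)) = Real.sqrt 2 := by
  rw [EuclideanSpace.dist_eq, Fin.sum_univ_two]
  have : ((a : ℝ) - b)^2 = 1 := by
    have h2 : ((a - b : ℤ) : ℝ)^2 = 1 := by rcases h with h | h <;> rw [h] <;> norm_num
    push_cast at h2
    linarith [h2]
  simp only [diag, Real.dist_eq]
  rw [sq_abs]
  rw [this]
  norm_num


/-- The constellation `Γ_C` above does not have equi-distance spectrum: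
`N((3,3), √2) = 1` while `N((1,1), √2) = 2`; in particular it is not
geometrically uniform. -/
theorem gammaEx_not_EDS_not_geometricallyUniform :
    ({y ∈ gammaEx | dist y pt33 = Real.sqrt 2}.ncard = 1) ∧
    ({y ∈ gammaEx | dist y pt11 = Real.sqrt 2}.ncard = 2) ∧
    ¬ (∀ x ∈ gammaEx, ∀ y ∈ gammaEx,
        ∃ T : EuclideanSpace ℝ (Fin 2) ≃ᵢ EuclideanSpace ℝ (Fin 2),
          T x = y ∧ T '' gammaEx = gammaEx) := by
  have hpt33 : pt33 = diag ((3 : ℤ) : ℝ) := by ext i; simp [pt33, diag]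
  have hpt11 : pt11 = diag ((1 : ℤ) : ℝ) := by ext i; simp [pt11, diag]
  have hdiag_inj : ∀ a b : ℤ, diag (a : ℝ) = diag (b : ℝ) → a = b := by
    intro a b h
    have := congrArg (· 0) h
    simp only [diag] at this
    exact_mod_cast this
  have h33 : {y ∈ gammaEx | dist y pt33 = Real.sqrt 2} = {diag ((2 : ℤ) : ℝ)} := by
    ext y
    simp only [Set.mem_setOf_eq, Set.mem_singleton_iff]
    constructor
    · rintro ⟨hy, hd⟩
      rw [hpt33] at hd
      obtain ⟨c, rfl, hc, k, m, hckm, hm0, hm3⟩ := mem_sphere_iff y 3 hy hd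
      have : c = 2 := by omega
      subst this; rfl
    · rintro rfl
      refine ⟨?_, ?_⟩
      · have := diag_mem 2
        simpa using this
      · rw [hpt33]
        exact dist_diag 2 3 (by omega)
  have h11 : {y ∈ gammaEx | dist y pt11 = Real.sqrt 2} = {diag ((0 : ℤ) : ℝ), diag ((2 : ℤ) : ℝ)} := by
    ext y
    simp only [Set.mem_setOf_eq, Set.mem_insert_iff, Set.mem_singleton_iff]
    constructor
    · rintro ⟨hy, hd⟩
      rw [hpt11] at hd
      obtain ⟨c, rfl, hc, k, m, hckm, hm0, hm3⟩ := mem_sphere_iff y 1 hy hd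
      have : c = 0 ∨ c = 2 := by omega
      rcases this with rfl | rfl
      · left; rfl
      · right; rfl
    · rintro (rfl | rfl)
      · exact ⟨by simpa using diag_mem 0, by rw [hpt11]; exact dist_diag 0 1 (by omega)⟩
      · exact ⟨by simpa using diag_mem 2, by rw [hpt11]; exact dist_diag 2 1 (by omega)⟩
  have hne : diag ((0 : ℤ) : ℝ) ≠ diag ((2 : ℤ) : ℝ) := by
    intro h; have := hdiag_inj _ _ h; omega
  refine ⟨by rw [h33]; exact Set.ncard_singleton _, by rw [h11]; exact Set.ncard_pair hne, ?_⟩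
  intro hGU
  have h33m : pt33 ∈ gammaEx := by rw [hpt33]; simpa using diag_mem 3
  have h11m : pt11 ∈ gammaEx := by rw [hpt11]; simpa using diag_mem 1
  obtain ⟨T, hT1, hT2⟩ := hGU pt33 h33m pt11 h11m
  have himg : T '' {y ∈ gammaEx | dist y pt33 = Real.sqrt 2}
      = {y ∈ gammaEx | dist y pt11 = Real.sqrt 2} := by
    ext z
    simp only [Set.mem_image, Set.mem_setOf_eq]
    constructor
    · rintro ⟨w, ⟨hwΓ, hwd⟩, rfl⟩
      refine ⟨?_, ?_⟩
      · rw [← hT2]; exact ⟨w, hwΓ, rfl⟩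
      · rw [← hT1, T.dist_eq]; exact hwd
    · rintro ⟨hzΓ, hzd⟩
      rw [← hT2] at hzΓ
      obtain ⟨w, hwΓ, rfl⟩ := hzΓ
      refine ⟨w, ⟨hwΓ, ?_⟩, rfl⟩
      rw [← T.dist_eq w pt33, hT1]
      exact hzd
  have hcard : ({y ∈ gammaEx | dist y pt33 = Real.sqrt 2}.ncard)
      = ({y ∈ gammaEx | dist y pt11 = Real.sqrt 2}.ncard) := by
    rw [← himg, Set.ncard_image_of_injective _ T.injective]
  rw [h33, h11, Set.ncard_singleton, Set.ncard_pair hne] at hcard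
  exact absurd hcard (by norm_num)
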